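/- arXiv:1803.08704 — 3 statements merged into one kernel-verified Lean document; each statement's English description precedes it below -/
import Mathlib

section
/- Let g ≥ 1 and n ≥ 1 be integers with (n : ℝ) ≤ 2g² − 16g·√(g+3). Then there exist natural numbers n_1, n_2, n_3, n_4, n_5 such that n − 1 = (2n_1² − n_1) + n_2² + n_3² + n_4² + n_5² and n_1 + n_2 + n_3 + n_4 + n_5 ≤ g − 1. -/
private lemma aux_P (k s0 M : ℤ) (hk : 0 ≤ k) (hs : 0 ≤ s0)
    (hS1 : s0 ^ 2 ≤ 8 * M + 1) (hK1 : 4 * k ≤ s0 + 1) :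
    2 * k ^ 2 - k ≤ M := by
  nlinarith [sq_nonneg (s0 - 4 * k + 1)]

private lemma aux_Q (k s0 M : ℤ) (hk : 0 ≤ k) (hs : 0 ≤ s0)
    (hS2 : 8 * M + 1 < (s0 + 1) ^ 2) (hK2 : s0 + 1 < 4 * k + 4) :
    M < 2 * (k + 1) ^ 2 - (k + 1) := by
  nlinarith [sq_nonneg (s0 + 1 - (4 * k + 3)), sq_nonneg (s0 + 1 + (4 * k + 3))]

private lemma aux_CS (a b c d k : ℤ) (hr : a ^ 2 + b ^ 2 + c ^ 2 + d ^ 2 ≤ 4 * k) :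
    (a + b + c + d) ^ 2 ≤ 16 * k := by
  nlinarith [sq_nonneg (a - b), sq_nonneg (a - c), sq_nonneg (a - d),
    sq_nonneg (b - c), sq_nonneg (b - d), sq_nonneg (c - d)]

private lemma aux_kg (k G M : ℤ) (hk : 0 ≤ k) (hG : 1 ≤ G)
    (h1 : 2 * k ^ 2 - k ≤ M) (h2 : M ≤ 2 * G ^ 2 - 2) : k ≤ G := by
  nlinarith

private lemma aux_xsq (x G t : ℝ) (hx0 : 0 ≤ x) (hxg : x ≤ G) (ht0 : 0 ≤ t)
    (ht2 : t ^ 2 = G + 3) (h2x : 2 * x ^ 2 - x ≤ 2 * G ^ 2 - 16 * G * t - 1) :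
    x ^ 2 ≤ (G - 4 * t) ^ 2 := by
  nlinarith

private lemma aux_ssq (s x G t : ℝ) (hs : 0 ≤ s) (hcs : s ^ 2 ≤ 16 * x)
    (hx : x ≤ G - 4 * t) (ht8 : 8 ≤ t) (ht2 : t ^ 2 = G + 3) :
    s ^ 2 ≤ (G - 1 - x) ^ 2 := by
  have hA : (0:ℝ) ≤ G - x - 4 * t := by linarith
  have hB : (0:ℝ) ≤ G - 2 - x + 4 * t := by linarith
  nlinarith [mul_nonneg hA hB]

/-- Arithmetic core of Theorem 5.1: if `1 ≤ n ≤ 2g² − 16g√(g+3)`, then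
`n − 1 = (2n₁² − n₁) + n₂² + n₃² + n₄² + n₅²` with `n₁ + ⋯ + n₅ ≤ g − 1`. -/
theorem stmt_13 (g n : ℤ) (hg : 1 ≤ g) (hn : 1 ≤ n)
    (h : (n : ℝ) ≤ 2 * (g : ℝ) ^ 2 - 16 * (g : ℝ) * Real.sqrt ((g : ℝ) + 3)) :
    ∃ n1 n2 n3 n4 n5 : ℕ,
      n - 1 = (2 * (n1 : ℤ) ^ 2 - (n1 : ℤ)) + (n2 : ℤ) ^ 2 + (n3 : ℤ) ^ 2
        + (n4 : ℤ) ^ 2 + (n5 : ℤ) ^ 2 ∧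
      (n1 : ℤ) + n2 + n3 + n4 + n5 ≤ g - 1 := by
  set t := Real.sqrt ((g : ℝ) + 3) with ht
  clear_value t
  have hgr : (1:ℝ) ≤ (g:ℝ) := by exact_mod_cast hg
  have hnr : (1:ℝ) ≤ (n:ℝ) := by exact_mod_cast hn
  have ht0 : 0 ≤ t := ht ▸ Real.sqrt_nonneg _
  have ht2 : t ^ 2 = (g:ℝ) + 3 := ht ▸ Real.sq_sqrt (by linarith)
  have hg8t : 8 * t < (g:ℝ) := by nlinarith [sq_nonneg ((g:ℝ) - 8 * t)]
  have ht8 : (8:ℝ) ≤ t := by nlinarith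
  obtain ⟨M, hM⟩ : ∃ M : ℕ, (M:ℤ) = n - 1 := ⟨(n-1).toNat, Int.toNat_of_nonneg (by omega)⟩
  set s0 : ℕ := Nat.sqrt (8 * M + 1) with hs0
  have hs1 : s0 ^ 2 ≤ 8 * M + 1 := by
    have := Nat.sqrt_le' (8 * M + 1); simpa [pow_two] using this
  have hs2 : 8 * M + 1 < (s0 + 1) ^ 2 := by
    have := Nat.lt_succ_sqrt' (8 * M + 1); simpa [pow_two] using this
  set k : ℕ := (s0 + 1) / 4 with hkdef
  have hk1 : 4 * k ≤ s0 + 1 := by omega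
  have hk2 : s0 + 1 < 4 * k + 4 := by omega
  clear_value s0 k
  have hK0 : (0:ℤ) ≤ (k:ℤ) := Int.natCast_nonneg k
  have hP : 2 * (k:ℤ) ^ 2 - k ≤ (M:ℤ) :=
    aux_P _ _ _ hK0 (Int.natCast_nonneg s0) (by exact_mod_cast hs1) (by exact_mod_cast hk1)
  have hQ : (M:ℤ) < 2 * ((k:ℤ) + 1) ^ 2 - ((k:ℤ) + 1) :=
    aux_Q _ _ _ hK0 (Int.natCast_nonneg s0) (by exact_mod_cast hs2) (by exact_mod_cast hk2)
  obtain ⟨r, hr'⟩ := Int.eq_ofNat_of_zero_le (show (0:ℤ) ≤ (M:ℤ) - (2 * (k:ℤ) ^ 2 - k) by linarith)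
  have hr : (r:ℤ) = (M:ℤ) - (2 * (k:ℤ) ^ 2 - k) := hr'.symm
  have hr4 : (r:ℤ) ≤ 4 * (k:ℤ) := by nlinarith
  obtain ⟨a, b, c, d, habcd⟩ := Nat.sum_four_squares r
  have habcdZ : (a:ℤ) ^ 2 + b ^ 2 + c ^ 2 + d ^ 2 = (M:ℤ) - (2 * (k:ℤ) ^ 2 - k) := by
    rw [← hr]; exact_mod_cast habcd
  refine ⟨k, a, b, c, d, ?_, ?_⟩
  · rw [← hM]; linarith [habcdZ]
  have hcs : ((a:ℤ) + b + c + d) ^ 2 ≤ 16 * (k:ℤ) :=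
    aux_CS _ _ _ _ _ (by rw [habcdZ]; linarith)
  have hn2g : n ≤ 2 * g ^ 2 - 1 := by
    have h1 : (n:ℝ) < 2 * (g:ℝ) ^ 2 := by nlinarith
    have h2 : n < 2 * g ^ 2 := by exact_mod_cast h1
    omega
  have hkg : (k:ℤ) ≤ g := aux_kg _ _ _ hK0 hg hP (by omega)
  have hx0 : (0:ℝ) ≤ ((k:ℕ):ℝ) := by positivity
  have hPr : 2 * ((k:ℕ):ℝ) ^ 2 - (k:ℕ) ≤ (n:ℝ) - 1 := by
    have h1 := hP; rw [hM] at h1; exact_mod_cast h1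
  have hkgr : ((k:ℕ):ℝ) ≤ (g:ℝ) := by exact_mod_cast hkg
  have hxsq : ((k:ℕ):ℝ) ^ 2 ≤ ((g:ℝ) - 4 * t) ^ 2 :=
    aux_xsq _ _ _ hx0 hkgr ht0 ht2 (by linarith)
  have hxle : ((k:ℕ):ℝ) ≤ (g:ℝ) - 4 * t := by
    have h1 := Real.sqrt_le_sqrt hxsq
    rwa [Real.sqrt_sq hx0, Real.sqrt_sq (by linarith : (0:ℝ) ≤ (g:ℝ) - 4 * t)] at h1
  have hs0' : (0:ℝ) ≤ (a:ℝ) + b + c + d := by positivity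
  have hcsr : ((a:ℝ) + b + c + d) ^ 2 ≤ 16 * ((k:ℕ):ℝ) := by exact_mod_cast hcs
  have hssq : ((a:ℝ) + b + c + d) ^ 2 ≤ ((g:ℝ) - 1 - (k:ℕ)) ^ 2 :=
    aux_ssq _ _ _ _ hs0' hcsr hxle ht8 ht2
  have hsle : (a:ℝ) + b + c + d ≤ (g:ℝ) - 1 - (k:ℕ) := by
    have h1 := Real.sqrt_le_sqrt hssq
    rwa [Real.sqrt_sq hs0', Real.sqrt_sq (by linarith : (0:ℝ) ≤ (g:ℝ) - 1 - (k:ℕ))] at h1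
  have hfinal : ((k:ℕ):ℝ) + a + b + c + d ≤ (g:ℝ) - 1 := by linarith
  exact_mod_cast hfinal
end

section
/- For each integer g ≥ 1 define A_g := { n ∈ ℕ : 1 ≤ n ≤ 2g² − g and there exist natural numbers n_1, …, n_5 with n − 1 = (2n_1² − n_1) + n_2² + n_3² + n_4² + n_5² and n_1 + ⋯ + n_5 ≤ g − 1 }. Then the ratio #A_g / (2g² − g) tends to 1 as g → ∞. -/
open Filter

private lemma fourSq (r : ℕ) : ∃ a b c d : ℕ,
    a ^ 2 + b ^ 2 + c ^ 2 + d ^ 2 = r ∧ a ≤ r.sqrt ∧ b ≤ r.sqrt ∧ c ≤ r.sqrt ∧ d ≤ r.sqrt := by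
  obtain ⟨a, b, c, d, h⟩ := Nat.sum_four_squares r
  exact ⟨a, b, c, d, h, Nat.le_sqrt.mpr (by nlinarith), Nat.le_sqrt.mpr (by nlinarith),
    Nat.le_sqrt.mpr (by nlinarith), Nat.le_sqrt.mpr (by nlinarith)⟩

private lemma keyLem (m : ℕ) : ∃ n1 r : ℕ, m + n1 = 2 * n1 ^ 2 + r ∧ r ≤ 4 * n1 ∧
    ∀ u : ℕ, m + u < 2 * u ^ 2 → n1 < u := by
  classical
  set P : ℕ → Prop := fun k => 2 * k ^ 2 ≤ m + k with hP
  set n1 := Nat.findGreatest P m with hn1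
  have hspec : P n1 := Nat.findGreatest_spec (Nat.zero_le m) (by simp [P])
  have hmax : ¬ P (n1 + 1) := by
    intro h
    have hle : n1 + 1 ≤ m := by
      have h2 : 2 * (n1 + 1) ^ 2 ≤ m + (n1 + 1) := h
      nlinarith
    exact Nat.findGreatest_is_greatest (Nat.lt_succ_self _) hle h
  have hub : m + n1 ≤ 2 * n1 ^ 2 + 4 * n1 := by
    have h2 : ¬ (2 * (n1 + 1) ^ 2 ≤ m + (n1 + 1)) := hmax
    push_neg at h2
    nlinarith
  refine ⟨n1, m + n1 - 2 * n1 ^ 2, by omega, by omega, ?_⟩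
  intro u hu
  by_contra hcon
  push_neg at hcon
  have h3 : 2 * n1 ^ 2 ≤ m + n1 := hspec
  have h4 : (u:ℤ) ≤ n1 := by exact_mod_cast hcon
  have h5 : (2:ℤ) * (n1:ℤ)^2 ≤ (m:ℤ) + n1 := by exact_mod_cast h3
  have h6 : (m:ℤ) + u < 2 * (u:ℤ)^2 := by exact_mod_cast hu
  have hu0 : (0:ℤ) ≤ (u:ℤ) := by positivity
  nlinarith [mul_nonneg (sub_nonneg.mpr h4) (sub_nonneg.mpr h4),
    mul_nonneg hu0 (sub_nonneg.mpr h4), sq_nonneg ((n1:ℤ) - u - 1)]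

private lemma sqrtBig {g q : ℕ} (hg : 100 ≤ g) (hq : q = Nat.sqrt (4 * g)) :
    4 * q + 5 ≤ g := by
  have h1 : (q:ℤ) ^ 2 ≤ 4 * (g:ℤ) := by
    have := hq ▸ Nat.sqrt_le' (4 * g)
    exact_mod_cast this
  have h2 : (100:ℤ) ≤ (g:ℤ) := by exact_mod_cast hg
  have : 4 * (q:ℤ) + 5 ≤ (g:ℤ) := by nlinarith [sq_nonneg ((q:ℤ) - 16)]
  exact_mod_cast this

private lemma mem_lem (g n : ℕ) (hg : 100 ≤ g) (hn1 : 1 ≤ n)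
    (hn2 : n ≤ 2 * (g - (4 * Nat.sqrt (4 * g) + 4)) ^ 2 - (g - (4 * Nat.sqrt (4 * g) + 4))) :
    1 ≤ n ∧ n ≤ 2 * g ^ 2 - g ∧
      ∃ n1 n2 n3 n4 n5 : ℕ,
        (n : ℤ) - 1 = (2 * (n1 : ℤ) ^ 2 - (n1 : ℤ)) + (n2 : ℤ) ^ 2
          + (n3 : ℤ) ^ 2 + (n4 : ℤ) ^ 2 + (n5 : ℤ) ^ 2 ∧
        (n1 : ℤ) + n2 + n3 + n4 + n5 ≤ (g : ℤ) - 1 := by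
  set q := Nat.sqrt (4 * g) with hqdef
  have hq5 : 4 * q + 5 ≤ g := sqrtBig hg rfl
  obtain ⟨u, hudef⟩ : ∃ u, g - (4 * q + 4) = u := ⟨_, rfl⟩
  rw [hudef] at hn2
  have hu1 : 1 ≤ u := by omega
  have hug : u ≤ g := by omega
  have h2u : u ≤ 2 * u ^ 2 := by nlinarith
  have hMg : 2 * u ^ 2 - u ≤ 2 * g ^ 2 - g := by
    have h1 : u ^ 2 + g ≤ g ^ 2 + u := by
      have hZ : ((u:ℤ) ^ 2 + g ≤ (g:ℤ) ^ 2 + u) := by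
        have hug' : (u:ℤ) ≤ g := by exact_mod_cast hug
        have hu1' : (1:ℤ) ≤ u := by exact_mod_cast hu1
        nlinarith [mul_nonneg (sub_nonneg.mpr hug') (by linarith : (0:ℤ) ≤ (g:ℤ) + u - 1)]
      exact_mod_cast hZ
    have h3 : g ≤ 2 * g ^ 2 := by nlinarith
    omega
  refine ⟨hn1, le_trans hn2 hMg, ?_⟩
  set m := n - 1 with hm
  have hn2'' : n + u ≤ 2 * u ^ 2 := Nat.add_le_of_le_sub h2u hn2
  have hmu : m + u < 2 * u ^ 2 :=
    lt_of_lt_of_le (Nat.add_lt_add_right (by omega : m < n) u) hn2''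
  obtain ⟨n1, r, heq, hr, hlt⟩ := keyLem m
  have hn1u : n1 < u := hlt u hmu
  obtain ⟨a, b, c, d, habcd, ha, hb, hc, hd⟩ := fourSq r
  have hrq : r.sqrt ≤ q := Nat.sqrt_le_sqrt (le_trans hr (by omega))
  refine ⟨n1, a, b, c, d, ?_, ?_⟩
  · have h1 : (m : ℤ) + n1 = 2 * (n1 : ℤ) ^ 2 + r := by exact_mod_cast heq
    have h2 : (a : ℤ) ^ 2 + b ^ 2 + c ^ 2 + d ^ 2 = r := by exact_mod_cast habcd
    have h3 : (m : ℤ) = (n : ℤ) - 1 := by omega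
    linarith
  · have ha' : a ≤ q := le_trans ha hrq
    have hb' : b ≤ q := le_trans hb hrq
    have hc' : c ≤ q := le_trans hc hrq
    have hd' : d ≤ q := le_trans hd hrq
    omega

private lemma card_bounds (g : ℕ) (hg : 100 ≤ g) :
    2 * (g - (4 * Nat.sqrt (4 * g) + 4)) ^ 2 - (g - (4 * Nat.sqrt (4 * g) + 4)) ≤
      Set.ncard {n : ℕ | 1 ≤ n ∧ n ≤ 2 * g ^ 2 - g ∧
        ∃ n1 n2 n3 n4 n5 : ℕ,
          (n : ℤ) - 1 = (2 * (n1 : ℤ) ^ 2 - (n1 : ℤ)) + (n2 : ℤ) ^ 2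
            + (n3 : ℤ) ^ 2 + (n4 : ℤ) ^ 2 + (n5 : ℤ) ^ 2 ∧
          (n1 : ℤ) + n2 + n3 + n4 + n5 ≤ (g : ℤ) - 1} ∧
    Set.ncard {n : ℕ | 1 ≤ n ∧ n ≤ 2 * g ^ 2 - g ∧
        ∃ n1 n2 n3 n4 n5 : ℕ,
          (n : ℤ) - 1 = (2 * (n1 : ℤ) ^ 2 - (n1 : ℤ)) + (n2 : ℤ) ^ 2
            + (n3 : ℤ) ^ 2 + (n4 : ℤ) ^ 2 + (n5 : ℤ) ^ 2 ∧
          (n1 : ℤ) + n2 + n3 + n4 + n5 ≤ (g : ℤ) - 1} ≤ 2 * g ^ 2 - g := by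
  set A : Set ℕ := {n : ℕ | 1 ≤ n ∧ n ≤ 2 * g ^ 2 - g ∧
        ∃ n1 n2 n3 n4 n5 : ℕ,
          (n : ℤ) - 1 = (2 * (n1 : ℤ) ^ 2 - (n1 : ℤ)) + (n2 : ℤ) ^ 2
            + (n3 : ℤ) ^ 2 + (n4 : ℤ) ^ 2 + (n5 : ℤ) ^ 2 ∧
          (n1 : ℤ) + n2 + n3 + n4 + n5 ≤ (g : ℤ) - 1} with hA
  have hsub : A ⊆ ↑(Finset.Icc 1 (2 * g ^ 2 - g)) := by
    intro n hn
    simp only [Finset.coe_Icc, Set.mem_Icc]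
    exact ⟨hn.1, hn.2.1⟩
  have hfin : A.Finite := Set.Finite.subset (Finset.Icc 1 (2 * g ^ 2 - g)).finite_toSet hsub
  constructor
  · have hsub2 : ↑(Finset.Icc 1 (2 * (g - (4 * Nat.sqrt (4 * g) + 4)) ^ 2
        - (g - (4 * Nat.sqrt (4 * g) + 4)))) ⊆ A := by
      intro n hn
      simp only [Finset.coe_Icc, Set.mem_Icc] at hn
      exact mem_lem g n hg hn.1 hn.2
    calc 2 * (g - (4 * Nat.sqrt (4 * g) + 4)) ^ 2 - (g - (4 * Nat.sqrt (4 * g) + 4))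
        = (Finset.Icc 1 (2 * (g - (4 * Nat.sqrt (4 * g) + 4)) ^ 2
            - (g - (4 * Nat.sqrt (4 * g) + 4)))).card := by rw [Nat.card_Icc]; omega
      _ = (↑(Finset.Icc 1 (2 * (g - (4 * Nat.sqrt (4 * g) + 4)) ^ 2
            - (g - (4 * Nat.sqrt (4 * g) + 4)))) : Set ℕ).ncard := (Set.ncard_coe_finset _).symm
      _ ≤ A.ncard := Set.ncard_le_ncard hsub2 hfin
  · calc A.ncard ≤ (↑(Finset.Icc 1 (2 * g ^ 2 - g)) : Set ℕ).ncard :=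
        Set.ncard_le_ncard hsub (Finset.Icc 1 (2 * g ^ 2 - g)).finite_toSet
    _ = (Finset.Icc 1 (2 * g ^ 2 - g)).card := Set.ncard_coe_finset _
    _ ≤ 2 * g ^ 2 - g := by rw [Nat.card_Icc]; omega

private lemma lower_ineq (g : ℕ) (hg : 100 ≤ g) :
    (1 - 40 / Real.sqrt g) * (2 * (g:ℝ) ^ 2 - g) ≤
      ((2 * (g - (4 * Nat.sqrt (4 * g) + 4)) ^ 2 - (g - (4 * Nat.sqrt (4 * g) + 4)) : ℕ) : ℝ) := by
  have hq5 : 4 * Nat.sqrt (4 * g) + 5 ≤ g := sqrtBig hg rfl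
  set q := Nat.sqrt (4 * g) with hq
  set u := g - (4 * q + 4) with hu
  have hug : u ≤ g := Nat.sub_le _ _
  have hu1 : 1 ≤ u := by omega
  have h2u : u ≤ 2 * u ^ 2 := by nlinarith
  have hG : (100:ℝ) ≤ (g:ℝ) := by exact_mod_cast hg
  have hw0 : 0 < Real.sqrt g := Real.sqrt_pos.mpr (by linarith)
  have hwsq : Real.sqrt g * Real.sqrt g = (g:ℝ) := Real.mul_self_sqrt (by linarith)
  have hw10 : 10 ≤ Real.sqrt g := by nlinarith
  have hqw : (q:ℝ) ≤ 2 * Real.sqrt g := by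
    have h1 : (q:ℝ) ^ 2 ≤ 4 * (g:ℝ) := by exact_mod_cast (Nat.sqrt_le' (4 * g))
    nlinarith [Nat.cast_nonneg (α := ℝ) q]
  have hsle : (4 * q + 4 : ℕ) ≤ g := by omega
  have huR : (u:ℝ) = (g:ℝ) - (4 * (q:ℝ) + 4) := by
    rw [hu, Nat.cast_sub hsle]; push_cast; ring
  have hMR : ((2 * u ^ 2 - u : ℕ) : ℝ) = 2 * (u:ℝ) ^ 2 - u := by
    rw [Nat.cast_sub h2u]; push_cast; ring
  rw [hMR]
  set w := Real.sqrt g with hwdef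
  set G := (g:ℝ) with hGdef
  set S := 4 * (q:ℝ) + 4 with hSdef
  have e0 : (0:ℝ) ≤ S := by positivity
  have eS : S ≤ 12 * w := by rw [hSdef]; nlinarith
  have hfrac : (1 - 40 / w) = (w - 40) / w := by field_simp
  rw [hfrac, div_mul_eq_mul_div, div_le_iff₀ hw0, huR]
  have hGw : G * (w * w) = G * G := by rw [hwsq]
  have h1 : S * (4 * G * w) ≤ 12 * w * (4 * G * w) :=
    mul_le_mul_of_nonneg_right eS (by positivity)
  have hGG : 100 * G ≤ G * G := by nlinarith
  nlinarith [h1, hGw, hGG, hG, mul_nonneg (mul_nonneg e0 e0) hw0.le,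
    mul_nonneg e0 hw0.le]

private lemma D_pos (g : ℕ) (hg : 100 ≤ g) : 0 < 2 * (g:ℝ) ^ 2 - g := by
  have hG : (100:ℝ) ≤ (g:ℝ) := by exact_mod_cast hg
  nlinarith

private lemma D_cast (g : ℕ) (hg : 100 ≤ g) : ((2 * g ^ 2 - g : ℕ) : ℝ) = 2 * (g:ℝ) ^ 2 - g := by
  have hgle : g ≤ 2 * g ^ 2 := by nlinarith
  rw [Nat.cast_sub hgle]; push_cast; ring

/-- Asymptotic density of realizable Picard numbers (Theorem 5.1):
`#A_g / (2g² − g) → 1` as `g → ∞`, where `A_g` is the set of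
`n ∈ [1, 2g² − g]` admitting a decomposition
`n − 1 = (2n₁² − n₁) + n₂² + n₃² + n₄² + n₅²` with `n₁ + ⋯ + n₅ ≤ g − 1`. -/
theorem stmt_14 :
    Filter.Tendsto
      (fun g : ℕ =>
        ((Set.ncard {n : ℕ | 1 ≤ n ∧ n ≤ 2 * g ^ 2 - g ∧
          ∃ n1 n2 n3 n4 n5 : ℕ,
            (n : ℤ) - 1 = (2 * (n1 : ℤ) ^ 2 - (n1 : ℤ)) + (n2 : ℤ) ^ 2
              + (n3 : ℤ) ^ 2 + (n4 : ℤ) ^ 2 + (n5 : ℤ) ^ 2 ∧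
            (n1 : ℤ) + n2 + n3 + n4 + n5 ≤ (g : ℤ) - 1} : ℕ) : ℝ)
          / (2 * (g : ℝ) ^ 2 - g))
      Filter.atTop (nhds 1) := by
  have hsqrt : Tendsto (fun g : ℕ => Real.sqrt g) atTop atTop := by
    rw [Filter.tendsto_atTop_atTop]
    intro b
    refine ⟨⌈b⌉₊ ^ 2, fun g hg => ?_⟩
    calc b ≤ (⌈b⌉₊ : ℝ) := Nat.le_ceil b
      _ = Real.sqrt ((⌈b⌉₊ : ℝ) ^ 2) := (Real.sqrt_sq (by positivity)).symm
      _ ≤ Real.sqrt g := Real.sqrt_le_sqrt (by exact_mod_cast hg)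
  have h0 : Tendsto (fun g : ℕ => 40 / Real.sqrt g) atTop (nhds 0) := by
    have h40 := hsqrt.inv_tendsto_atTop.const_mul (40 : ℝ)
    simpa [div_eq_mul_inv] using h40
  have hlo : Tendsto (fun g : ℕ => 1 - 40 / Real.sqrt g) atTop (nhds 1) := by
    simpa using (tendsto_const_nhds (x := (1:ℝ)) (f := atTop)).sub h0
  apply tendsto_of_tendsto_of_tendsto_of_le_of_le' hlo
    (tendsto_const_nhds (x := (1:ℝ)) (f := atTop))
  · filter_upwards [eventually_ge_atTop 100] with g hg
    rw [le_div_iff₀ (D_pos g hg)]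
    exact le_trans (lower_ineq g hg) (Nat.cast_le.mpr (card_bounds g hg).1)
  · filter_upwards [eventually_ge_atTop 100] with g hg
    rw [div_le_one (D_pos g hg), ← D_cast g hg]
    exact Nat.cast_le.mpr (card_bounds g hg).2
end

section
/- Let g ≥ 5 be an integer and let n be an integer with 0 ≤ n ≤ g − 1. Then the two inequalities g² < [2(g−n)² − (g−n)] + 1 and [2(g−n−1)² − (g−n−1)] + (n+1)² < [2(g−n)² − (g−n)] + 1 both hold if and only if (n : ℝ) < min( (4g − 1 − √(8g² − 7))/4 , √(4g + 6) − 3 ). -/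
/-- Lemma 5.2 in arithmetic form: for `g ≥ 5` and `0 ≤ n ≤ g − 1`, the two
numerical conditions defining large Picard numbers hold simultaneously iff
`n < min( (4g − 1 − √(8g² − 7))/4 , √(4g+6) − 3 )`. -/
theorem stmt_18 (g n : ℤ) (hg : 5 ≤ g) (hn1 : 0 ≤ n) (hn2 : n ≤ g - 1) :
    (g ^ 2 < (2 * (g - n) ^ 2 - (g - n)) + 1 ∧
      (2 * (g - n - 1) ^ 2 - (g - n - 1)) + (n + 1) ^ 2
        < (2 * (g - n) ^ 2 - (g - n)) + 1) ↔
      (n : ℝ) < min ((4 * (g : ℝ) - 1 - Real.sqrt (8 * (g : ℝ) ^ 2 - 7)) / 4)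
        (Real.sqrt (4 * (g : ℝ) + 6) - 3) := by
  have hgR : (5:ℝ) ≤ (g:ℝ) := by exact_mod_cast hg
  have hnR : (0:ℝ) ≤ (n:ℝ) := by exact_mod_cast hn1
  have hn2R : (n:ℝ) ≤ (g:ℝ) - 1 := by
    have : (n:ℝ) ≤ ((g:ℤ) - 1 : ℤ) := by exact_mod_cast hn2
    push_cast at this; linarith
  set s := Real.sqrt (8 * (g:ℝ)^2 - 7) with hs_def
  have hs0 : 0 ≤ s := Real.sqrt_nonneg _
  have hs2 : s^2 = 8*(g:ℝ)^2 - 7 := Real.sq_sqrt (by nlinarith)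
  set t := Real.sqrt (4*(g:ℝ)+6) with ht_def
  have ht0 : 0 ≤ t := Real.sqrt_nonneg _
  have ht2 : t^2 = 4*(g:ℝ)+6 := Real.sq_sqrt (by nlinarith)
  rw [lt_min_iff]
  constructor
  · rintro ⟨h1, h2⟩
    have h1R : (g:ℝ)^2 < 2*((g:ℝ)-(n:ℝ))^2 - ((g:ℝ)-(n:ℝ)) + 1 := by exact_mod_cast h1
    have h2R : 2*((g:ℝ)-(n:ℝ)-1)^2 - ((g:ℝ)-(n:ℝ)-1) + ((n:ℝ)+1)^2
        < 2*((g:ℝ)-(n:ℝ))^2 - ((g:ℝ)-(n:ℝ)) + 1 := by exact_mod_cast h2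
    constructor
    · have key : s < 4*(g:ℝ) - 1 - 4*(n:ℝ) := by
        nlinarith [sq_nonneg (s - (4*(g:ℝ) - 1 - 4*(n:ℝ))), sq_nonneg (s + (4*(g:ℝ) - 1 - 4*(n:ℝ)))]
      linarith
    · have key : (n:ℝ) + 3 < t := by
        rw [ht_def]
        refine (Real.lt_sqrt (by linarith)).mpr ?_
        nlinarith
      linarith
  · rintro ⟨h1, h2⟩
    have key1 : s < 4*(g:ℝ) - 1 - 4*(n:ℝ) := by linarith
    have key2 : (n:ℝ) + 3 < t := by linarith
    constructor
    · have : (g:ℝ)^2 < 2*((g:ℝ)-(n:ℝ))^2 - ((g:ℝ)-(n:ℝ)) + 1 := by nlinarith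
      exact_mod_cast this
    · have hsq : ((n:ℝ)+3)^2 < 4*(g:ℝ)+6 := by
        rw [← ht2]
        have := mul_self_lt_mul_self (by linarith : (0:ℝ) ≤ (n:ℝ)+3) key2
        simpa [pow_two] using this
      have : 2*((g:ℝ)-(n:ℝ)-1)^2 - ((g:ℝ)-(n:ℝ)-1) + ((n:ℝ)+1)^2
          < 2*((g:ℝ)-(n:ℝ))^2 - ((g:ℝ)-(n:ℝ)) + 1 := by nlinarith [hsq]
      exact_mod_cast this
end
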